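/- Measure of the unstable hyperbolic-time block: Let (X, μ) be a probability space, f : X → X an invertible bimeasurable measure-preserving map with μ ergodic, and φ : X → ℝ a measurable function with φ(z) ≥ −L̄ for all z ∈ X. Let c > 0 with L̄ ≥ c and suppose that for μ-almost every x one has limsup_{n→∞} S_nφ(x)/n < −c. Then μ({x ∈ X : S_kφ(f^{−k}(x)) ≤ −(7c/8)·k for every k ≥ 1}) ≥ c/(8L̄ − 7c). -/

import Mathlib

open MeasureTheory Filter
open scoped ENNReal NNReal Topology

/-- **Measure of the unstable hyperbolic-time block.** Let `(X, μ)` be a probability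
space, `f` an invertible bimeasurable measure-preserving map with `μ` ergodic, and `φ`
measurable with `φ ≥ −L̄`. Let `L̄ ≥ c > 0` and suppose `limsup_n S_nφ(x)/n < −c` for
`μ`-a.e. `x`. Then the set of points `x` such that
`S_kφ(f^{−k}(x)) ≤ −(7c/8)·k` for every `k ≥ 1` has `μ`-measure at least
`c/(8L̄ − 7c)`. -/
theorem unstable_hyperbolic_block_measure {X : Type*} [MeasurableSpace X]
    (μ : Measure X) [IsProbabilityMeasure μ]
    (f : X ≃ᵐ X) (herg : Ergodic (⇑f) μ)
    (φ : X → ℝ) (hφm : Measurable φ) (L : ℝ) (hφ : ∀ z, -L ≤ φ z)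
    (c : ℝ) (hc : 0 < c) (hcL : c ≤ L)
    (hae : ∀ᵐ x ∂μ,
      limsup (fun n : ℕ => birkhoffSum (⇑f) φ n x / n) atTop < -c) :
    ENNReal.ofReal (c / (8 * L - 7 * c)) ≤
      μ {x | ∀ k : ℕ, 1 ≤ k →
        birkhoffSum (⇑f) φ k ((⇑f.symm)^[k] x) ≤ -(7 * c / 8) * k} := by
  classical
  set c₂ : ℝ := 7 * c / 8 with hc₂def
  set A : ℝ := L - c₂ with hAdef
  have hA0 : 0 < A := by rw [hAdef, hc₂def]; linarith
  set θ : ℝ := c / (8 * L - 7 * c) with hθdef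
  have h8 : 0 < 8 * L - 7 * c := by linarith
  have hθ0 : 0 < θ := div_pos hc h8
  have hθA : θ * A = c / 8 := by
    rw [hθdef, hAdef, hc₂def]
    rw [div_mul_eq_mul_div, div_eq_iff h8.ne']
    ring
  -- the decreasing family of sets
  set E : ℕ → Set X := fun n =>
    {y | ∀ k, 1 ≤ k → k ≤ n → birkhoffSum (⇑f) φ k ((⇑f.symm)^[k] y) ≤ -c₂ * k} with hEdef
  have hEmeas : ∀ n, MeasurableSet (E n) := by
    intro n
    have hb : ∀ k : ℕ, Measurable fun y => birkhoffSum (⇑f) φ k ((⇑f.symm)^[k] y) := by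
      intro k
      have h1 : Measurable fun y => birkhoffSum (⇑f) φ k y := by
        show Measurable fun y => ∑ i ∈ Finset.range k, φ ((⇑f)^[i] y)
        exact Finset.measurable_sum _ fun i _ => hφm.comp (f.measurable.iterate i)
      exact h1.comp (f.symm.measurable.iterate k)
    have hre : E n = ⋂ (k : ℕ), ⋂ (_ : 1 ≤ k), ⋂ (_ : k ≤ n),
        {y | birkhoffSum (⇑f) φ k ((⇑f.symm)^[k] y) ≤ -c₂ * k} := by
      ext y
      simp [hEdef, Set.mem_iInter]
    rw [hre]
    exact MeasurableSet.iInter fun k => MeasurableSet.iInter fun _ =>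
      MeasurableSet.iInter fun _ => measurableSet_le (hb k) measurable_const
  have hEanti : Antitone E := by
    intro m n hmn y hy k hk1 hk2
    exact hy k hk1 (hk2.trans hmn)
  -- records
  set S : X → ℕ → ℝ := fun x n => -(birkhoffSum (⇑f) φ n x) - c₂ * n with hSdef
  set R : X → ℕ → ℕ :=
    fun x N => ((Finset.Icc 1 N).filter (fun n => ∀ m < n, S x m ≤ S x n)).card with hRdef
  -- Pliss counting lemma
  have P1 : ∀ x N, ∀ k ≤ N, S x k ≤ A * R x N := by
    intro x N
    induction N with
    | zero =>
      intro k hk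
      have hk0 : k = 0 := Nat.le_zero.mp hk
      subst hk0
      have h1 : S x 0 = 0 := by simp [hSdef]
      have h2 : R x 0 = 0 := by simp [hRdef]
      simp [h1, h2]
    | succ N ih =>
      have hmono : (R x N : ℝ) ≤ R x (N + 1) := by
        exact_mod_cast Finset.card_le_card
          (Finset.filter_subset_filter _ (Finset.Icc_subset_Icc_right (Nat.le_succ N)))
      intro k hk
      rcases eq_or_lt_of_le hk with h | h
      · subst h
        by_cases hrec : ∀ m < N + 1, S x m ≤ S x (N + 1)
        · have hins : Finset.Icc 1 (N + 1) = insert (N + 1) (Finset.Icc 1 N) := by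
            ext m
            simp only [Finset.mem_Icc, Finset.mem_insert]
            omega
          have hRsucc : R x (N + 1) = R x N + 1 := by
            rw [hRdef]
            simp only [hins, Finset.filter_insert, if_pos hrec]
            rw [Finset.card_insert_of_notMem]
            intro hmem
            have := (Finset.mem_filter.mp hmem).1
            simp only [Finset.mem_Icc] at this
            omega
          have hstep : S x (N + 1) ≤ S x N + A := by
            have h1 := hφ ((⇑f)^[N] x)
            have h2 : birkhoffSum (⇑f) φ (N + 1) x
                = birkhoffSum (⇑f) φ N x + φ ((⇑f)^[N] x) := birkhoffSum_succ (⇑f) φ N x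
            simp only [hSdef, h2, hAdef]
            push_cast
            linarith
          have := ih N le_rfl
          rw [hRsucc]
          push_cast
          linarith
        · push_neg at hrec
          obtain ⟨m, hm, hlt⟩ := hrec
          have h1 := ih m (Nat.lt_succ_iff.mp hm)
          have : A * (R x N : ℝ) ≤ A * R x (N + 1) :=
            mul_le_mul_of_nonneg_left hmono hA0.le
          linarith
      · have h1 := ih k (Nat.lt_succ_iff.mp h)
        have : A * (R x N : ℝ) ≤ A * R x (N + 1) :=
          mul_le_mul_of_nonneg_left hmono hA0.le
        linarith
  -- inverse iterates
  have hsymm_iter : ∀ (k n : ℕ), k ≤ n → ∀ x, (⇑f.symm)^[k] ((⇑f)^[n] x) = (⇑f)^[n - k] x := by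
    intro k n hkn x
    have h1 : (⇑f)^[n] x = (⇑f)^[k] ((⇑f)^[n - k] x) := by
      rw [← Function.iterate_add_apply]
      congr 1
      omega
    rw [h1]
    have hli : Function.LeftInverse (⇑f.symm) (⇑f) := f.symm_apply_apply
    exact (hli.iterate k) _
  -- record points land in the blocks
  have P3 : ∀ x n, (∀ m < n, S x m ≤ S x n) → ∀ j ≤ n, (⇑f)^[n] x ∈ E j := by
    intro x n hrec j hj
    simp only [hEdef, Set.mem_setOf_eq]
    intro k hk1 hkj
    have hkn : k ≤ n := hkj.trans hj
    rw [hsymm_iter k n hkn x]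
    have hsum : birkhoffSum (⇑f) φ (n - k) x + birkhoffSum (⇑f) φ k ((⇑f)^[n - k] x)
        = birkhoffSum (⇑f) φ n x := by
      rw [← birkhoffSum_add]
      congr 1
      omega
    have hrec' := hrec (n - k) (by omega)
    simp only [hSdef] at hrec'
    have hcast : ((n - k : ℕ) : ℝ) = (n : ℝ) - k := by
      rw [Nat.cast_sub hkn]
    rw [hcast] at hrec'
    linarith
  -- main claim: each block has measure at least θ
  have key : ∀ n₀ : ℕ, ENNReal.ofReal θ ≤ μ (E n₀) := by
    intro n₀
    set g : ℕ → X → ℝ≥0∞ := fun N x =>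
      (∑ n ∈ Finset.Icc 1 N, ((⇑f)^[n] ⁻¹' (E n₀)).indicator (1 : X → ℝ≥0∞) x) / N with hgdef
    have hpre : ∀ n : ℕ, MeasurableSet ((⇑f)^[n] ⁻¹' (E n₀)) :=
      fun n => (f.measurable.iterate n) (hEmeas n₀)
    have hgmeas : ∀ N, Measurable (g N) := by
      intro N
      apply Measurable.div_const
      exact Finset.measurable_sum _ fun n _ => measurable_one.indicator (hpre n)
    have hgcount : ∀ N x, g N x =
        (((Finset.Icc 1 N).filter (fun n => (⇑f)^[n] x ∈ E n₀)).card : ℝ≥0∞) / N := by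
      intro N x
      simp only [hgdef]
      congr 1
      rw [Finset.card_filter]
      push_cast
      refine Finset.sum_congr rfl fun n _ => ?_
      by_cases h : (⇑f)^[n] x ∈ E n₀ <;> simp [Set.indicator_apply, h]
    have P4 : ∀ x N, R x N ≤
        ((Finset.Icc 1 N).filter (fun n => (⇑f)^[n] x ∈ E n₀)).card + n₀ := by
      intro x N
      have hsub : (Finset.Icc 1 N).filter (fun n => ∀ m < n, S x m ≤ S x n) ⊆
          ((Finset.Icc 1 N).filter (fun n => (⇑f)^[n] x ∈ E n₀)) ∪ (Finset.Ico 0 n₀) := by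
        intro n hn
        rcases Finset.mem_filter.mp hn with ⟨hmem, hrec⟩
        rcases lt_or_ge n n₀ with h | h
        · exact Finset.mem_union_right _ (by simp only [Finset.mem_Ico]; omega)
        · exact Finset.mem_union_left _
            (Finset.mem_filter.mpr ⟨hmem, P3 x n hrec n₀ h⟩)
      calc R x N ≤ (((Finset.Icc 1 N).filter (fun n => (⇑f)^[n] x ∈ E n₀))
            ∪ (Finset.Ico 0 n₀)).card := Finset.card_le_card hsub
        _ ≤ ((Finset.Icc 1 N).filter (fun n => (⇑f)^[n] x ∈ E n₀)).card
            + (Finset.Ico 0 n₀).card := Finset.card_union_le _ _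
        _ = ((Finset.Icc 1 N).filter (fun n => (⇑f)^[n] x ∈ E n₀)).card + n₀ := by simp
    -- a.e. lower bound on the liminf
    have haelim : ∀ᵐ x ∂μ, ENNReal.ofReal θ ≤ liminf (fun N => g N x) atTop := by
      filter_upwards [hae] with x hx
      have hbdd : IsBoundedUnder (· ≤ ·) atTop
          (fun n : ℕ => birkhoffSum (⇑f) φ n x / n) := by
        by_contra hb
        have hempty : {a : ℝ | ∀ᶠ n : ℕ in atTop, birkhoffSum (⇑f) φ n x / n ≤ a} = ∅ := by
          ext a
          simp only [Set.mem_setOf_eq, Set.mem_empty_iff_false, iff_false]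
          intro ha
          exact hb ⟨a, eventually_map.mpr ha⟩
        rw [Filter.limsup_eq, hempty, Real.sInf_empty] at hx
        linarith
      have hev : ∀ᶠ N : ℕ in atTop, birkhoffSum (⇑f) φ N x / N < -c :=
        eventually_lt_of_limsup_lt hx hbdd
      have hev2 : ∀ᶠ N : ℕ in atTop,
          ENNReal.ofReal (θ - (n₀ : ℝ) * (N : ℝ)⁻¹) ≤ g N x := by
        filter_upwards [hev, eventually_ge_atTop 1] with N hN hN1
        have hNpos : (0 : ℝ) < N := by exact_mod_cast hN1
        have hT : birkhoffSum (⇑f) φ N x < -c * N := by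
          have := (div_lt_iff₀ hNpos).mp hN
          linarith
        have hSN : (c / 8) * N ≤ S x N := by
          simp only [hSdef, hc₂def]
          nlinarith
        have hP1 := P1 x N N le_rfl
        have hRθ : θ * N ≤ (R x N : ℝ) := by
          have h1 : (θ * A) * N ≤ A * (R x N : ℝ) := by
            rw [hθA]; exact le_trans hSN hP1
          have h2 : A * (θ * N) ≤ A * (R x N : ℝ) := by
            calc A * (θ * N) = (θ * A) * N := by ring
              _ ≤ A * (R x N : ℝ) := h1
          exact (mul_le_mul_iff_right₀ hA0).mp h2
        have hP4 := P4 x N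
        set Cd := ((Finset.Icc 1 N).filter (fun n => (⇑f)^[n] x ∈ E n₀)).card with hCdef
        have hC : θ * N - n₀ ≤ (Cd : ℝ) := by
          have h2 : (R x N : ℝ) ≤ (Cd : ℝ) + n₀ := by exact_mod_cast hP4
          linarith
        rw [hgcount, ← hCdef]
        have hfin : θ - (n₀ : ℝ) * (N : ℝ)⁻¹ ≤ (Cd : ℝ) / N := by
          rw [le_div_iff₀ hNpos]
          have h3 : (θ - (n₀ : ℝ) * (N : ℝ)⁻¹) * N = θ * N - n₀ := by
            field_simp
          rw [h3]
          linarith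
        calc ENNReal.ofReal (θ - (n₀ : ℝ) * (N : ℝ)⁻¹)
            ≤ ENNReal.ofReal ((Cd : ℝ) / N) := ENNReal.ofReal_le_ofReal hfin
          _ = (Cd : ℝ≥0∞) / N := by
            rw [ENNReal.ofReal_div_of_pos hNpos, ENNReal.ofReal_natCast,
              ENNReal.ofReal_natCast]
      have htendS : Tendsto (fun N : ℕ => ENNReal.ofReal (θ - (n₀ : ℝ) * (N : ℝ)⁻¹)) atTop
          (𝓝 (ENNReal.ofReal θ)) := by
        have h1 : Tendsto (fun N : ℕ => θ - (n₀ : ℝ) * (N : ℝ)⁻¹) atTop (𝓝 θ) := by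
          have h2 := tendsto_inv_atTop_nhds_zero_nat.const_mul (n₀ : ℝ)
          simpa using tendsto_const_nhds.sub h2
        exact (ENNReal.continuous_ofReal.tendsto θ).comp h1
      calc ENNReal.ofReal θ
          = liminf (fun N : ℕ => ENNReal.ofReal (θ - (n₀ : ℝ) * (N : ℝ)⁻¹)) atTop :=
            htendS.liminf_eq.symm
        _ ≤ liminf (fun N => g N x) atTop := liminf_le_liminf hev2
    -- integral of g N
    have hint : ∀ᶠ N : ℕ in atTop, ∫⁻ x, g N x ∂μ = μ (E n₀) := by
      filter_upwards [eventually_ge_atTop 1] with N hN1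
      have hmeas_sum : Measurable fun x =>
          ∑ n ∈ Finset.Icc 1 N, ((⇑f)^[n] ⁻¹' (E n₀)).indicator (1 : X → ℝ≥0∞) x :=
        Finset.measurable_sum _ fun n _ => measurable_one.indicator (hpre n)
      have h1 : ∫⁻ x, g N x ∂μ = (N : ℝ≥0∞)⁻¹ *
          ∫⁻ x, ∑ n ∈ Finset.Icc 1 N, ((⇑f)^[n] ⁻¹' (E n₀)).indicator (1 : X → ℝ≥0∞) x ∂μ := by
        rw [← lintegral_const_mul _ hmeas_sum]
        apply lintegral_congr
        intro x
        simp only [hgdef]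
        rw [div_eq_mul_inv, mul_comm]
      rw [h1, lintegral_finset_sum _ (fun n _ => measurable_one.indicator (hpre n))]
      have h2 : ∀ n ∈ Finset.Icc 1 N,
          ∫⁻ x, ((⇑f)^[n] ⁻¹' (E n₀)).indicator (1 : X → ℝ≥0∞) x ∂μ = μ (E n₀) := by
        intro n _
        rw [lintegral_indicator_one (hpre n)]
        exact (herg.toMeasurePreserving.iterate n).measure_preimage
          (hEmeas n₀).nullMeasurableSet
      rw [Finset.sum_congr rfl h2, Finset.sum_const, Nat.card_Icc]
      simp only [Nat.add_sub_cancel, nsmul_eq_mul]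
      rw [← mul_assoc, ENNReal.inv_mul_cancel
        (Nat.cast_ne_zero.mpr (by omega)) (ENNReal.natCast_ne_top N), one_mul]
    have hliminf_int : liminf (fun N => ∫⁻ x, g N x ∂μ) atTop = μ (E n₀) := by
      rw [liminf_congr hint]
      exact liminf_const _
    calc ENNReal.ofReal θ = ∫⁻ _, ENNReal.ofReal θ ∂μ := by
          simp [lintegral_const]
      _ ≤ ∫⁻ x, liminf (fun N => g N x) atTop ∂μ := lintegral_mono_ae haelim
      _ ≤ liminf (fun N => ∫⁻ x, g N x ∂μ) atTop := lintegral_liminf_le hgmeas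
      _ = μ (E n₀) := hliminf_int
  -- conclusion
  have hTarget : {x | ∀ k : ℕ, 1 ≤ k →
      birkhoffSum (⇑f) φ k ((⇑f.symm)^[k] x) ≤ -c₂ * k} = ⋂ n, E n := by
    ext y
    simp only [Set.mem_setOf_eq, Set.mem_iInter, hEdef]
    constructor
    · intro h n k hk1 hkn
      exact h k hk1
    · intro h k hk1
      exact h k k hk1 le_rfl
  rw [hTarget]
  have htend := tendsto_measure_iInter_atTop
    (fun n => (hEmeas n).nullMeasurableSet) hEanti ⟨0, measure_ne_top μ _⟩
  exact ge_of_tendsto' htend key
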